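/- Let m, n be positive integers and h a norm on ℝ^m with generated norm H on ℝ^{m×n}. Then the dual norm of H is the operator norm from (ℝ^n, |·|) to (ℝ^m, h_*): for every M ∈ ℝ^{m×n}, sup { M:N : N ∈ ℝ^{m×n}, H(N) ≤ 1 } = sup { h_*(M e) : e ∈ ℝ^n, |e| = 1 }. -/

import Mathlib

open MeasureTheory

noncomputable section

/-- `ℝ^n` with the Euclidean norm. -/
abbrev Euc (n : ℕ) := EuclideanSpace ℝ (Fin n)

/-- `h` is a norm on `ℝ^m`. -/
def IsNorm {m : ℕ} (h : (Fin m → ℝ) → ℝ) : Prop :=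
  (∀ x y, h (x + y) ≤ h x + h y) ∧ (∀ (c : ℝ) (x), h (c • x) = |c| * h x) ∧
    ∀ x, h x = 0 → x = 0

/-- The dual norm `h_*` of `h`: `h_*(g) = sup { g·θ : h θ ≤ 1 }`. -/
def dualNorm {m : ℕ} (h : (Fin m → ℝ) → ℝ) (g : Fin m → ℝ) : ℝ :=
  sSup {r | ∃ θ : Fin m → ℝ, h θ ≤ 1 ∧ r = ∑ i, g i * θ i}

/-- Matrix-vector product `M u`. -/
def matVec {m n : ℕ} (M : Fin m → Fin n → ℝ) (u : Euc n) : Fin m → ℝ :=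
  fun i => ∑ j, M i j * u j

/-- Frobenius inner product `M : N`. -/
def frob {m n : ℕ} (M N : Fin m → Fin n → ℝ) : ℝ := ∑ i, ∑ j, M i j * N i j

/-- `M ∈ ∂H(0)`, i.e. `h_*(M u) ≤ 1` for all `|u| ≤ 1`. -/
def inSubdiffH {m n : ℕ} (h : (Fin m → ℝ) → ℝ) (M : Fin m → Fin n → ℝ) : Prop :=
  ∀ u : Euc n, ‖u‖ ≤ 1 → dualNorm h (matVec M u) ≤ 1

/-- The norm `H` on `ℝ^{m×n}` generated by `h`:
`H(N) = sup { M:N : M ∈ ∂H(0) }`. -/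
def genNorm {m n : ℕ} (h : (Fin m → ℝ) → ℝ) (N : Fin m → Fin n → ℝ) : ℝ :=
  sSup {r | ∃ M : Fin m → Fin n → ℝ, inSubdiffH h M ∧ r = frob M N}

/-- The rank-one matrix `θ ⊗ e`. -/
def outer {m n : ℕ} (θ : Fin m → ℝ) (e : Euc n) : Fin m → Fin n → ℝ :=
  fun i j => θ i * e j

/-! ### Auxiliary lemmas about the norm `h` -/

section Aux

variable {m : ℕ} {h : (Fin m → ℝ) → ℝ} {c C : ℝ}

lemma h_zero (hh : IsNorm h) : h 0 = 0 := by
  have := hh.2.1 0 0; simpa using this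

lemma h_neg (hh : IsNorm h) (x : Fin m → ℝ) : h (-x) = h x := by
  have := hh.2.1 (-1) x; simpa using this

lemma h_nonneg (hh : IsNorm h) (x : Fin m → ℝ) : 0 ≤ h x := by
  have h0 : h 0 = 0 := h_zero hh
  have := hh.1 x (-x)
  rw [add_neg_cancel, h0, h_neg hh] at this
  linarith

lemma h_sum_le (hh : IsNorm h) {ι : Type*} (s : Finset ι) (f : ι → Fin m → ℝ) :
    h (∑ i ∈ s, f i) ≤ ∑ i ∈ s, h (f i) := by
  classical
  induction s using Finset.induction with
  | empty => simp [h_zero hh]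
  | insert _ _ hx ih =>
    rw [Finset.sum_insert hx, Finset.sum_insert hx]
    exact le_trans (hh.1 _ _) (by linarith)

lemma h_le_C (hh : IsNorm h) :
    ∃ C : ℝ, 0 < C ∧ ∀ x, h x ≤ C * ‖x‖ := by
  classical
  have hs : 0 ≤ ∑ i, h (Pi.single i (1:ℝ)) :=
    Finset.sum_nonneg fun i _ => h_nonneg hh _
  refine ⟨(∑ i, h (Pi.single i 1)) + 1, by linarith, fun x => ?_⟩
  set b : Fin m → Fin m → ℝ := fun i => Pi.single i 1 with hb
  have hx : x = ∑ i, x i • b i := by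
    funext j; simp [hb, Pi.single_apply, Finset.sum_apply]
  calc h x = h (∑ i, x i • b i) := by rw [← hx]
    _ ≤ ∑ i, h (x i • b i) := h_sum_le hh _ _
    _ = ∑ i, |x i| * h (Pi.single i (1:ℝ)) := by simp [hh.2.1, hb]
    _ ≤ ∑ i, ‖x‖ * h (Pi.single i (1:ℝ)) := by
        refine Finset.sum_le_sum fun i _ => ?_
        exact mul_le_mul_of_nonneg_right (by simpa using norm_le_pi_norm x i) (h_nonneg hh _)
    _ = (∑ i, h (Pi.single i (1:ℝ))) * ‖x‖ := by
        rw [Finset.sum_mul]; exact Finset.sum_congr rfl fun i _ => mul_comm _ _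
    _ ≤ ((∑ i, h (Pi.single i (1:ℝ))) + 1) * ‖x‖ := by
        exact mul_le_mul_of_nonneg_right (by linarith) (norm_nonneg x)

lemma h_continuous (hh : IsNorm h) : Continuous h := by
  obtain ⟨C, hC, hle⟩ := h_le_C hh
  have : LipschitzWith ⟨C, hC.le⟩ h := by
    apply LipschitzWith.of_dist_le_mul
    intro x y
    rw [Real.dist_eq, dist_eq_norm]
    rcases abs_cases (h x - h y) with ⟨he, _⟩ | ⟨he, _⟩ <;> rw [he]
    · have := hh.1 (x - y) y
      simp only [sub_add_cancel] at this
      have := hle (x - y)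
      push_cast
      change h x - h y ≤ C * ‖x - y‖
      linarith
    · have := hh.1 (y - x) x
      simp only [sub_add_cancel] at this
      have h2 := hle (y - x)
      have h3 : ‖y - x‖ = ‖x - y‖ := by rw [← neg_sub, norm_neg]
      rw [h3] at h2
      push_cast
      change -(h x - h y) ≤ C * ‖x - y‖
      linarith
  exact this.continuous

lemma h_lower (hm : 0 < m) (hh : IsNorm h) :
    ∃ c : ℝ, 0 < c ∧ ∀ x, c * ‖x‖ ≤ h x := by
  have hsc : IsCompact (Metric.sphere (0 : Fin m → ℝ) 1) := isCompact_sphere _ _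
  have hne : (Metric.sphere (0 : Fin m → ℝ) 1).Nonempty := by
    refine ⟨Pi.single ⟨0, hm⟩ 1, ?_⟩
    simp [Pi.norm_single]
  obtain ⟨z, hz, hzmin⟩ := hsc.exists_isMinOn hne (h_continuous hh).continuousOn
  have hz1 : ‖z‖ = 1 := by simpa using hz
  have hz0 : z ≠ 0 := by intro hzz; rw [hzz] at hz1; simp at hz1
  have hc : 0 < h z := by
    rcases lt_or_eq_of_le (h_nonneg hh z) with h1 | h1
    · exact h1
    · exact absurd (hh.2.2 z h1.symm) hz0
  refine ⟨h z, hc, fun x => ?_⟩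
  by_cases hx : x = 0
  · simp [hx, h_zero hh]
  · have hnx : (0:ℝ) < ‖x‖ := norm_pos_iff.2 hx
    have hmem : ‖x‖⁻¹ • x ∈ Metric.sphere (0 : Fin m → ℝ) 1 := by
      simp [norm_smul, abs_of_pos (inv_pos.2 hnx), inv_mul_cancel₀ hnx.ne']
    have := hzmin hmem
    have heq : h (‖x‖⁻¹ • x) = ‖x‖⁻¹ * h x := by
      rw [hh.2.1]; rw [abs_of_pos (inv_pos.2 hnx)]
    simp only [IsMinOn, Set.mem_setOf_eq] at this
    rw [heq] at this
    calc h z * ‖x‖ ≤ (‖x‖⁻¹ * h x) * ‖x‖ := by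
          exact mul_le_mul_of_nonneg_right this (norm_nonneg x)
      _ = h x := by field_simp

/-! ### Lemmas about the dual norm -/

lemma dual_elem_le (hc : 0 < c) (hlow : ∀ x, c * ‖x‖ ≤ h x) (g θ : Fin m → ℝ)
    (hθ : h θ ≤ 1) : ∑ i, g i * θ i ≤ (∑ i, |g i|) * c⁻¹ := by
  have hbound : ∀ i, |θ i| ≤ c⁻¹ := by
    intro i
    have h1 : ‖θ‖ ≤ c⁻¹ := by
      rw [← one_div, le_div_iff₀ hc]
      nlinarith [hlow θ]
    exact le_trans (by simpa using norm_le_pi_norm θ i) h1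
  calc ∑ i, g i * θ i ≤ ∑ i, |g i| * c⁻¹ := by
        refine Finset.sum_le_sum fun i _ => ?_
        calc g i * θ i ≤ |g i * θ i| := le_abs_self _
          _ = |g i| * |θ i| := abs_mul _ _
          _ ≤ |g i| * c⁻¹ := mul_le_mul_of_nonneg_left (hbound i) (abs_nonneg _)
    _ = (∑ i, |g i|) * c⁻¹ := by rw [Finset.sum_mul]

lemma dual_bddAbove (hc : 0 < c) (hlow : ∀ x, c * ‖x‖ ≤ h x) (g : Fin m → ℝ) :
    BddAbove {r | ∃ θ : Fin m → ℝ, h θ ≤ 1 ∧ r = ∑ i, g i * θ i} := by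
  refine ⟨(∑ i, |g i|) * c⁻¹, ?_⟩
  rintro r ⟨θ, hθ, rfl⟩
  exact dual_elem_le hc hlow g θ hθ

lemma pairing_le (hc : 0 < c) (hlow : ∀ x, c * ‖x‖ ≤ h x) (g θ : Fin m → ℝ)
    (hθ : h θ ≤ 1) : ∑ i, g i * θ i ≤ dualNorm h g :=
  le_csSup (dual_bddAbove hc hlow g) ⟨θ, hθ, rfl⟩

lemma dual_nonneg (hh : IsNorm h) (hc : 0 < c) (hlow : ∀ x, c * ‖x‖ ≤ h x)
    (g : Fin m → ℝ) : 0 ≤ dualNorm h g := by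
  have := pairing_le hc hlow g 0 (by rw [h_zero hh]; norm_num)
  simpa using this

lemma dual_le {g : Fin m → ℝ} {B : ℝ} (hB : 0 ≤ B)
    (hbd : ∀ θ : Fin m → ℝ, h θ ≤ 1 → ∑ i, g i * θ i ≤ B) : dualNorm h g ≤ B := by
  apply Real.sSup_le _ hB
  rintro r ⟨θ, hθ, rfl⟩
  exact hbd θ hθ

lemma dual_le_sum (hc : 0 < c) (hlow : ∀ x, c * ‖x‖ ≤ h x) (g : Fin m → ℝ) :
    dualNorm h g ≤ (∑ i, |g i|) * c⁻¹ := by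
  refine dual_le (by positivity) fun θ hθ => dual_elem_le hc hlow g θ hθ

lemma dual_zero (hh : IsNorm h) (hc : 0 < c) (hlow : ∀ x, c * ‖x‖ ≤ h x) :
    dualNorm h (0 : Fin m → ℝ) = 0 :=
  le_antisymm (dual_le le_rfl (by simp)) (dual_nonneg hh hc hlow 0)

lemma dual_smul (hh : IsNorm h) (hc : 0 < c) (hlow : ∀ x, c * ‖x‖ ≤ h x)
    {a : ℝ} (ha : 0 ≤ a) (g : Fin m → ℝ) :
    dualNorm h (fun i => a * g i) = a * dualNorm h g := by
  rcases eq_or_lt_of_le ha with rfl | ha'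
  · simp only [zero_mul]
    rw [show (fun _ : Fin m => (0:ℝ)) = (0 : Fin m → ℝ) from rfl, dual_zero hh hc hlow]
  · apply le_antisymm
    · apply dual_le (mul_nonneg ha (dual_nonneg hh hc hlow g))
      intro θ hθ
      have : ∑ i, a * g i * θ i = a * ∑ i, g i * θ i := by
        rw [Finset.mul_sum]; exact Finset.sum_congr rfl fun i _ => by ring
      rw [this]
      exact mul_le_mul_of_nonneg_left (pairing_le hc hlow g θ hθ) ha
    · rw [← le_div_iff₀' ha']
      apply dual_le (div_nonneg (dual_nonneg hh hc hlow _) ha)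
      intro θ hθ
      rw [le_div_iff₀' ha']
      have : a * ∑ i, g i * θ i = ∑ i, a * g i * θ i := by
        rw [Finset.mul_sum]; exact Finset.sum_congr rfl fun i _ => by ring
      rw [this]
      exact pairing_le hc hlow _ θ hθ

lemma dual_coord (hc : 0 < c) (hlow : ∀ x, c * ‖x‖ ≤ h x)
    (hC : 0 < C) (hup : ∀ x, h x ≤ C * ‖x‖) (hh : IsNorm h) (g : Fin m → ℝ) (i : Fin m) :
    |g i| ≤ C * dualNorm h g := by
  classical
  set s : ℝ := if 0 ≤ g i then 1 else -1 with hs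
  set θ : Fin m → ℝ := Pi.single i (s / C) with hθd
  have hsing : θ = (s / C) • (Pi.single i 1 : Fin m → ℝ) := by
    funext j; by_cases hji : j = i <;> simp [hθd, hji, Pi.single_apply]
  have hnorm1 : ‖(Pi.single i 1 : Fin m → ℝ)‖ = 1 := by
    rw [Pi.norm_single]; norm_num
  have habs : |s| = 1 := by
    rcases le_or_gt 0 (g i) with h1 | h1 <;> simp [hs, h1, not_le.2, h1]
  have hθ1 : h θ ≤ 1 := by
    rw [hsing, hh.2.1, abs_div, habs, abs_of_pos hC]
    calc 1 / C * h (Pi.single i 1) ≤ 1 / C * (C * ‖(Pi.single i 1 : Fin m → ℝ)‖) := by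
          exact mul_le_mul_of_nonneg_left (hup _) (by positivity)
      _ = 1 := by rw [hnorm1]; field_simp
  have hsum : ∑ j, g j * θ j = |g i| / C := by
    rw [hθd]
    rw [Finset.sum_eq_single i]
    · rcases le_or_gt 0 (g i) with h1 | h1
      · simp only [hs, h1, if_true, Pi.single_eq_same, abs_of_nonneg h1]; ring
      · simp only [hs, not_le.2 h1, if_false, Pi.single_eq_same, abs_of_neg h1]
        ring
    · intro j _ hji; simp [Pi.single_apply, hji]
    · intro hi; exact absurd (Finset.mem_univ i) hi
  have := pairing_le hc hlow g θ hθ1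
  rw [hsum, div_le_iff₀ hC] at this
  linarith [this]

end Aux

/-! ### Lemmas about the generated norm -/

section Gen

variable {m n : ℕ} {h : (Fin m → ℝ) → ℝ} {c C : ℝ}

lemma subdiff_entry (hc : 0 < c) (hlow : ∀ x, c * ‖x‖ ≤ h x)
    (hC : 0 < C) (hup : ∀ x, h x ≤ C * ‖x‖) (hh : IsNorm h)
    {A : Fin m → Fin n → ℝ} (hA : inSubdiffH h A) (i : Fin m) (j : Fin n) :
    |A i j| ≤ C := by
  set e : Euc n := EuclideanSpace.single j 1 with he
  have hne : ‖e‖ = 1 := by simp [he, EuclideanSpace.norm_single]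
  have hcol : matVec A e = fun i' => A i' j := by
    funext i'; simp [matVec, he, EuclideanSpace.single_apply]
  have h1 := dual_coord hc hlow hC hup hh (matVec A e) i
  rw [hcol] at h1
  have h2 : dualNorm h (matVec A e) ≤ 1 := hA e hne.le
  rw [hcol] at h2
  calc |A i j| ≤ C * dualNorm h (fun i' => A i' j) := h1
    _ ≤ C * 1 := mul_le_mul_of_nonneg_left h2 hC.le
    _ = C := mul_one C

lemma gen_bddAbove (hc : 0 < c) (hlow : ∀ x, c * ‖x‖ ≤ h x)
    (hC : 0 < C) (hup : ∀ x, h x ≤ C * ‖x‖) (hh : IsNorm h) (N : Fin m → Fin n → ℝ) :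
    BddAbove {r | ∃ A : Fin m → Fin n → ℝ, inSubdiffH h A ∧ r = frob A N} := by
  refine ⟨C * ∑ i, ∑ j, |N i j|, ?_⟩
  rintro r ⟨A, hA, rfl⟩
  rw [Finset.mul_sum]
  refine Finset.sum_le_sum fun i _ => ?_
  rw [Finset.mul_sum]
  refine Finset.sum_le_sum fun j _ => ?_
  calc A i j * N i j ≤ |A i j * N i j| := le_abs_self _
    _ = |A i j| * |N i j| := abs_mul _ _
    _ ≤ C * |N i j| :=
        mul_le_mul_of_nonneg_right (subdiff_entry hc hlow hC hup hh hA i j) (abs_nonneg _)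

lemma frob_le_gen (hc : 0 < c) (hlow : ∀ x, c * ‖x‖ ≤ h x)
    (hC : 0 < C) (hup : ∀ x, h x ≤ C * ‖x‖) (hh : IsNorm h)
    {A : Fin m → Fin n → ℝ} (hA : inSubdiffH h A) (N : Fin m → Fin n → ℝ) :
    frob A N ≤ genNorm h N :=
  le_csSup (gen_bddAbove hc hlow hC hup hh N) ⟨A, hA, rfl⟩

lemma frob_outer (M : Fin m → Fin n → ℝ) (θ : Fin m → ℝ) (e : Euc n) :
    frob M (outer θ e) = ∑ i, matVec M e i * θ i := by
  simp only [frob, outer, matVec]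
  refine Finset.sum_congr rfl fun i _ => ?_
  rw [Finset.sum_mul]
  exact Finset.sum_congr rfl fun j _ => by ring

lemma gen_outer_le (hc : 0 < c) (hlow : ∀ x, c * ‖x‖ ≤ h x)
    {θ : Fin m → ℝ} {e : Euc n} (hθ : h θ ≤ 1) (he : ‖e‖ = 1) :
    genNorm h (outer θ e) ≤ 1 := by
  apply Real.sSup_le _ zero_le_one
  rintro r ⟨A, hA, rfl⟩
  rw [frob_outer]
  exact le_trans (pairing_le hc hlow _ θ hθ) (hA e he.le)

end Gen

/-- the dual norm of `H` is the operator norm from `(ℝ^n, |·|)` to `(ℝ^m, h_*)`. -/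
theorem statement1 {m n : ℕ} (hm : 0 < m) (hn : 0 < n)
    (h : (Fin m → ℝ) → ℝ) (hh : IsNorm h) :
    ∀ M : Fin m → Fin n → ℝ,
      sSup {r | ∃ N : Fin m → Fin n → ℝ, genNorm h N ≤ 1 ∧ r = frob M N} =
      sSup {r | ∃ e : Euc n, ‖e‖ = 1 ∧ r = dualNorm h (matVec M e)} := by
  intro M
  obtain ⟨C, hC, hup⟩ := h_le_C hh
  obtain ⟨c, hc, hlow⟩ := h_lower hm hh
  set S1 := {r | ∃ N : Fin m → Fin n → ℝ, genNorm h N ≤ 1 ∧ r = frob M N} with hS1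
  set S2 := {r | ∃ e : Euc n, ‖e‖ = 1 ∧ r = dualNorm h (matVec M e)} with hS2
  set α := sSup S2 with hα
  -- S2 is bounded above
  have hS2bdd : BddAbove S2 := by
    refine ⟨(∑ i, ∑ j, |M i j|) * c⁻¹, ?_⟩
    rintro r ⟨e, he, rfl⟩
    refine le_trans (dual_le_sum hc hlow _) ?_
    refine mul_le_mul_of_nonneg_right ?_ (by positivity)
    refine Finset.sum_le_sum fun i _ => ?_
    calc |matVec M e i| ≤ ∑ j, |M i j * e j| := by
          rw [show |matVec M e i| = |∑ j, M i j * e j| from rfl]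
          exact Finset.abs_sum_le_sum_abs _ _
      _ ≤ ∑ j, |M i j| := by
          refine Finset.sum_le_sum fun j _ => ?_
          rw [abs_mul]
          have hej : |e j| ≤ 1 := by
            rw [← he]
            have h1 := EuclideanSpace.norm_eq e
            rw [h1, show |e j| = Real.sqrt (‖e j‖^2) by rw [Real.sqrt_sq_eq_abs]; simp]
            apply Real.sqrt_le_sqrt
            exact Finset.single_le_sum (f := fun i => ‖e i‖^2)
              (fun i _ => by positivity) (Finset.mem_univ j)
          calc |M i j| * |e j| ≤ |M i j| * 1 :=
                mul_le_mul_of_nonneg_left hej (abs_nonneg _)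
            _ = |M i j| := mul_one _
  -- α is nonnegative
  have hα0 : 0 ≤ α := by
    set e1 : Euc n := EuclideanSpace.single ⟨0, hn⟩ 1 with he1
    have hne1 : ‖e1‖ = 1 := by simp [he1, EuclideanSpace.norm_single]
    exact le_trans (dual_nonneg hh hc hlow (matVec M e1))
      (le_csSup hS2bdd ⟨e1, hne1, rfl⟩)
  -- the key inequality: every element of S1 is at most α
  have key : ∀ r ∈ S1, r ≤ α := by
    rintro r ⟨N, hN, rfl⟩
    by_cases hM0 : M = 0
    · rw [hM0]
      simpa [frob] using hα0
    · obtain ⟨i0, j0, hij⟩ : ∃ i j, M i j ≠ 0 := by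
        by_contra hcon
        push_neg at hcon
        exact hM0 (funext fun i => funext fun j => hcon i j)
      set e0 : Euc n := EuclideanSpace.single j0 1 with he0d
      have he0 : ‖e0‖ = 1 := by simp [he0d, EuclideanSpace.norm_single]
      have hcol : matVec M e0 = fun i => M i j0 := by
        funext i; simp [matVec, he0d, EuclideanSpace.single_apply]
      have hd : 0 < dualNorm h (matVec M e0) := by
        have h1 := dual_coord hc hlow hC hup hh (matVec M e0) i0
        rw [hcol] at h1
        have h2 : 0 < |M i0 j0| := abs_pos.2 hij
        have h3 : 0 ≤ dualNorm h (matVec M e0) := dual_nonneg hh hc hlow _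
        rw [hcol] at h3 ⊢
        nlinarith
      have hαpos : 0 < α := lt_of_lt_of_le hd (le_csSup hS2bdd ⟨e0, he0, rfl⟩)
      -- operator norm bound: dualNorm h (M u) ≤ α for ‖u‖ ≤ 1
      have hMu_le : ∀ u : Euc n, ‖u‖ ≤ 1 → dualNorm h (matVec M u) ≤ α := by
        intro u hu
        by_cases hu0 : u = 0
        · rw [hu0]
          have h0 : matVec M (0 : Euc n) = 0 := by
            funext i
            simp only [matVec]
            rw [show ((0 : Euc n) : Fin n → ℝ) = fun _ => 0 from rfl]
            simp
          rw [h0, dual_zero hh hc hlow]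
          exact hα0
        · set e : Euc n := ‖u‖⁻¹ • u with hed
          have he : ‖e‖ = 1 := norm_smul_inv_norm hu0
          have hnu : 0 < ‖u‖ := norm_pos_iff.2 hu0
          have hrep : matVec M u = fun i => ‖u‖ * matVec M e i := by
            funext i
            simp only [matVec, hed]
            rw [Finset.mul_sum]
            refine Finset.sum_congr rfl fun j _ => ?_
            have hcoord : ((‖u‖⁻¹ • u : Euc n) : Fin n → ℝ) j = ‖u‖⁻¹ * u j := rfl
            rw [hcoord]
            field_simp
          rw [hrep, dual_smul hh hc hlow (norm_nonneg u)]
          have h2 : dualNorm h (matVec M e) ≤ α := le_csSup hS2bdd ⟨e, he, rfl⟩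
          calc ‖u‖ * dualNorm h (matVec M e) ≤ 1 * α :=
                mul_le_mul hu h2 (dual_nonneg hh hc hlow _) zero_le_one
            _ = α := one_mul α
      -- rescale M so that it lies in the subdifferential
      set A : Fin m → Fin n → ℝ := fun i j => α⁻¹ * M i j with hAd
      have hA : inSubdiffH h A := by
        intro u hu
        have hAv : matVec A u = fun i => α⁻¹ * matVec M u i := by
          funext i
          simp only [matVec, hAd]
          rw [Finset.mul_sum]
          exact Finset.sum_congr rfl fun j _ => by ring
        rw [hAv, dual_smul hh hc hlow (inv_nonneg.2 hαpos.le)]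
        calc α⁻¹ * dualNorm h (matVec M u) ≤ α⁻¹ * α :=
              mul_le_mul_of_nonneg_left (hMu_le u hu) (inv_nonneg.2 hαpos.le)
          _ = 1 := inv_mul_cancel₀ hαpos.ne'
      have hfle : frob A N ≤ genNorm h N := frob_le_gen hc hlow hC hup hh hA N
      have hfrobA : frob A N = α⁻¹ * frob M N := by
        simp only [frob, hAd]
        rw [Finset.mul_sum]
        refine Finset.sum_congr rfl fun i _ => ?_
        rw [Finset.mul_sum]
        exact Finset.sum_congr rfl fun j _ => by ring
      have h3 : α⁻¹ * frob M N ≤ 1 := by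
        rw [← hfrobA]; exact le_trans hfle hN
      calc frob M N = α * (α⁻¹ * frob M N) := by field_simp
        _ ≤ α * 1 := mul_le_mul_of_nonneg_left h3 hαpos.le
        _ = α := mul_one α
  have hS1bdd : BddAbove S1 := ⟨α, key⟩
  have hS1zero : (0 : ℝ) ∈ S1 := by
    refine ⟨0, ?_, by simp [frob]⟩
    apply Real.sSup_le _ zero_le_one
    rintro r ⟨A, _, rfl⟩
    simp [frob]
  have hS1nonneg : 0 ≤ sSup S1 := le_csSup hS1bdd hS1zero
  refine le_antisymm (Real.sSup_le key hα0) (Real.sSup_le ?_ hS1nonneg)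
  rintro r ⟨e, he, rfl⟩
  apply dual_le hS1nonneg
  intro θ hθ
  rw [show ∑ i, matVec M e i * θ i = frob M (outer θ e) from (frob_outer M θ e).symm]
  exact le_csSup hS1bdd ⟨outer θ e, gen_outer_le hc hlow hθ he, rfl⟩
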